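/- Let γ ∈ SL₂(ℂ)\SU₂(ℂ) with Ψ(γ) = [[A,C′],[C,A′]]. Then the center P_{Ψ(γ)} = −C⁻¹A′ and the point Ψ(γ⁻¹)(0) = −C̄·(A*)⁻¹ are inverse points with respect to S²: they lie on the same ray from the origin and the product of their Euclidean norms equals 1. Explicitly, P_{Ψ(γ)}·(Ψ(γ⁻¹)(0))⁻¹ = |A|²|C|⁻² ∈ ℝ. -/

import Mathlib

set_option maxHeartbeats 1000000


open scoped Quaternion
open Matrix

/-- Embedding of `ℂ` into the real quaternions `ℍ`. -/
noncomputable def toQ (z : ℂ) : ℍ[ℝ] := ⟨z.re, z.im, 0, 0⟩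

/-- The quaternion `j`. -/
noncomputable def jq : ℍ[ℝ] := ⟨0, 0, 1, 0⟩

/-- The map `Ψ(γ) = ḡ γ g` where `g = (1/√2)[[1,j],[j,1]]`. -/
noncomputable def Ψ (γ : Matrix (Fin 2) (Fin 2) ℂ) : Matrix (Fin 2) (Fin 2) ℍ[ℝ] :=
  ((Real.sqrt 2)⁻¹ • !![(1 : ℍ[ℝ]), -jq; -jq, 1]) * (γ.map toQ) *
    ((Real.sqrt 2)⁻¹ • !![(1 : ℍ[ℝ]), jq; jq, 1])

/-- `‖γ‖²`, the sum of the squared moduli of the entries of `γ`. -/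
noncomputable def mnorm (γ : Matrix (Fin 2) (Fin 2) ℂ) : ℝ :=
  Complex.normSq (γ 0 0) + Complex.normSq (γ 0 1) + Complex.normSq (γ 1 0) + Complex.normSq (γ 1 1)

/-- For `u = u₀+u₁i+u₂j+u₃k`, `u* = u₀+u₁i+u₂j−u₃k`. -/
noncomputable def starred (u : ℍ[ℝ]) : ℍ[ℝ] := ⟨u.re, u.imI, u.imJ, -u.imK⟩

lemma normSq_mk (a b c d : ℝ) :
    Quaternion.normSq (⟨a, b, c, d⟩ : ℍ[ℝ]) = a ^ 2 + b ^ 2 + c ^ 2 + d ^ 2 :=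
  Quaternion.normSq_def' _

lemma psi_entry (γ : Matrix (Fin 2) (Fin 2) ℂ) :
    Ψ γ 0 0 = ⟨((γ 0 0).re + (γ 1 1).re)/2, ((γ 0 0).im - (γ 1 1).im)/2,
      ((γ 0 1).re - (γ 1 0).re)/2, ((γ 0 1).im + (γ 1 0).im)/2⟩ ∧
    Ψ γ 1 0 = ⟨((γ 1 0).re + (γ 0 1).re)/2, ((γ 1 0).im - (γ 0 1).im)/2,
      ((γ 1 1).re - (γ 0 0).re)/2, ((γ 1 1).im + (γ 0 0).im)/2⟩ ∧
    Ψ γ 1 1 = ⟨((γ 1 1).re + (γ 0 0).re)/2, ((γ 1 1).im - (γ 0 0).im)/2,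
      ((γ 1 0).re - (γ 0 1).re)/2, ((γ 1 0).im + (γ 0 1).im)/2⟩ := by
  have h2 : √2 * √2 = 2 := Real.mul_self_sqrt (by norm_num)
  refine ⟨?_, ?_, ?_⟩ <;>
  · simp only [Ψ, Matrix.mul_apply, Fin.sum_univ_two, Matrix.smul_apply, Matrix.map_apply,
      Matrix.of_apply, Matrix.cons_val', Matrix.cons_val_zero, Matrix.cons_val_one,
      Matrix.head_cons, Matrix.head_fin_const, Matrix.empty_val', Matrix.cons_val_fin_one]
    ext <;> simp [Quaternion.re_mul, Quaternion.imI_mul, Quaternion.imJ_mul, Quaternion.imK_mul] <;> simp [toQ, jq] <;> field_simp <;> (simp only [Real.sq_sqrt (show (0:ℝ) ≤ 2 by norm_num)]; ring)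


/-- For `γ ∈ SL₂(ℂ)\SU₂(ℂ)` with `Ψ(γ) = [[A,C′],[C,A′]]`, the center `P = −C⁻¹A′` and the
point `Ψ(γ⁻¹)(0) = −C̄·(A*)⁻¹` are inverse points with respect to `S²`: they lie on the same
ray from the origin (their ratio is the positive real number `|A|²|C|⁻²`) and the product of
their Euclidean norms equals `1`. -/
theorem stmt9 (γ : Matrix (Fin 2) (Fin 2) ℂ) (hdet : γ.det = 1) (hsu : mnorm γ ≠ 2) :
    (-(Ψ γ 1 0)⁻¹ * Ψ γ 1 1) * (-(star (Ψ γ 1 0)) * (starred (Ψ γ 0 0))⁻¹)⁻¹ =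
      ((Quaternion.normSq (Ψ γ 0 0) * (Quaternion.normSq (Ψ γ 1 0))⁻¹ : ℝ) : ℍ[ℝ]) ∧
    ‖-(Ψ γ 1 0)⁻¹ * Ψ γ 1 1‖ * ‖-(star (Ψ γ 1 0)) * (starred (Ψ γ 0 0))⁻¹‖ = 1 ∧
    -(star (Ψ γ 1 0)) * (starred (Ψ γ 0 0))⁻¹ =
      (Quaternion.normSq (-(Ψ γ 1 0)⁻¹ * Ψ γ 1 1))⁻¹ • (-(Ψ γ 1 0)⁻¹ * Ψ γ 1 1) := by
  obtain ⟨hA, hC, hA'⟩ := psi_entry γ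
  set A := Ψ γ 0 0 with hAdef
  set C := Ψ γ 1 0 with hCdef
  set A' := Ψ γ 1 1 with hA'def
  -- determinant real part
  have hre : (γ 0 0).re * (γ 1 1).re - (γ 0 0).im * (γ 1 1).im
      - (γ 0 1).re * (γ 1 0).re + (γ 0 1).im * (γ 1 0).im = 1 := by
    have := congrArg Complex.re hdet
    rw [Matrix.det_fin_two] at this
    simp [Complex.mul_re] at this; linarith
  -- normSq identities
  have f1 : Quaternion.normSq A' = Quaternion.normSq A := by
    rw [hA, hA']; simp only [normSq_mk]; ring
  have f2 : Quaternion.normSq (starred A) = Quaternion.normSq A := by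
    simp only [starred, Quaternion.normSq_def', normSq_mk]; ring
  have f3 : Quaternion.normSq A = Quaternion.normSq C + 1 := by
    rw [hA, hC]; simp only [normSq_mk]; nlinarith [hre]
  have f4 : Quaternion.normSq C = (mnorm γ - 2) / 4 := by
    rw [hC]; simp only [normSq_mk, mnorm, Complex.normSq_apply]
    nlinarith [hre]
  have hCn : Quaternion.normSq C ≠ 0 := by
    rw [f4]; exact div_ne_zero (sub_ne_zero.mpr hsu) (by norm_num)
  have hAn : Quaternion.normSq A ≠ 0 := by
    have := Quaternion.normSq_nonneg (a := C); rw [f3]; positivity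
  have hsAn : Quaternion.normSq (starred A) ≠ 0 := by rw [f2]; exact hAn
  have hC0 : C ≠ 0 := Quaternion.normSq_ne_zero.mp hCn
  have hsA0 : starred A ≠ 0 := Quaternion.normSq_ne_zero.mp hsAn
  -- key algebraic identity
  have key : A' * starred A = ((Quaternion.normSq A : ℝ) : ℍ[ℝ]) := by
    have hn : Quaternion.normSq A = (((γ 0 0).re + (γ 1 1).re)/2)^2
        + (((γ 0 0).im - (γ 1 1).im)/2)^2 + (((γ 0 1).re - (γ 1 0).re)/2)^2
        + (((γ 0 1).im + (γ 1 0).im)/2)^2 := by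
      rw [hA]; simp [normSq_mk]
    rw [hn]
    ext <;>
      simp only [Quaternion.re_mul, Quaternion.imI_mul, Quaternion.imJ_mul,
        Quaternion.imK_mul, Quaternion.re_coe, Quaternion.imI_coe, Quaternion.imJ_coe,
        Quaternion.imK_coe] <;> simp only [starred, hA, hA'] <;> ring
  -- coercion of inverse
  have hcoeinv : ∀ r : ℝ, ((r⁻¹ : ℝ) : ℍ[ℝ]) = ((r : ℍ[ℝ]))⁻¹ := by
    intro r
    have := map_inv₀ (algebraMap ℝ ℍ[ℝ]) r
    exact this
  set nA := Quaternion.normSq A with hnA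
  set nC := Quaternion.normSq C with hnC
  have g1 : (-C⁻¹ * A') * (-(star C) * (starred A)⁻¹)⁻¹ = ((nA * nC⁻¹ : ℝ) : ℍ[ℝ]) := by
    calc (-C⁻¹ * A') * (-(star C) * (starred A)⁻¹)⁻¹
        = C⁻¹ * (A' * starred A) * (star C)⁻¹ := by
          rw [_root_.mul_inv_rev, inv_inv, inv_neg]; noncomm_ring
      _ = C⁻¹ * ((nA : ℝ) : ℍ[ℝ]) * (star C)⁻¹ := by rw [key]
      _ = ((nA : ℝ) : ℍ[ℝ]) * (C⁻¹ * (star C)⁻¹) := by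
          rw [← Quaternion.coe_commutes, mul_assoc]
      _ = ((nA : ℝ) : ℍ[ℝ]) * (star C * C)⁻¹ := by rw [_root_.mul_inv_rev]
      _ = ((nA : ℝ) : ℍ[ℝ]) * (((nC : ℝ) : ℍ[ℝ]))⁻¹ := by rw [Quaternion.star_mul_self]
      _ = ((nA * nC⁻¹ : ℝ) : ℍ[ℝ]) := by rw [← hcoeinv, ← Quaternion.coe_mul]
  refine ⟨g1, ?_, ?_⟩
  · have hCnorm : ‖C‖ ≠ 0 := norm_ne_zero_iff.mpr hC0
    have hsAnorm : ‖starred A‖ ≠ 0 := norm_ne_zero_iff.mpr hsA0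
    have heq : ‖A'‖ = ‖starred A‖ := by
      have h1 := Quaternion.normSq_eq_norm_mul_self A'
      have h2 := Quaternion.normSq_eq_norm_mul_self (starred A)
      nlinarith [norm_nonneg A', norm_nonneg (starred A), f1, f2]
    rw [norm_mul, norm_mul, norm_neg, norm_neg, norm_inv, norm_inv, Quaternion.norm_star, heq]
    field_simp
  · set L1 := -C⁻¹ * A' with hL1
    set Q := -(star C) * (starred A)⁻¹ with hQ
    have hr : nA * nC⁻¹ ≠ 0 := mul_ne_zero hAn (inv_ne_zero hCn)
    have hr0 : ((nA * nC⁻¹ : ℝ) : ℍ[ℝ]) ≠ 0 := fun h => hr (Quaternion.coe_injective (by simpa using h))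
    have hQ0 : Q ≠ 0 :=
      mul_ne_zero (neg_ne_zero.mpr (star_ne_zero.mpr hC0)) (inv_ne_zero hsA0)
    have hP : Quaternion.normSq L1 = nA * nC⁻¹ := by
      rw [hL1, neg_mul, Quaternion.normSq_neg, _root_.map_mul, map_inv₀, f1, mul_comm, ← hnC]
    have hL : L1 = ((nA * nC⁻¹ : ℝ) : ℍ[ℝ]) * Q :=
      (mul_inv_eq_iff_eq_mul₀ hQ0).mp g1
    have : Q = (((nA * nC⁻¹ : ℝ) : ℍ[ℝ]))⁻¹ * L1 := by
      rw [hL, ← mul_assoc, inv_mul_cancel₀ hr0, one_mul]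
    rw [this, hP, ← hcoeinv, Quaternion.coe_mul_eq_smul]
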